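/- Recalibration preserves sharpness: Let S be a scoring rule with induced generalized entropy H and generalized conditional mutual information I. Let X, Y, Q be jointly distributed random variables, with Q a random probability measure on the target space, such that Y and Q are conditionally independent given X. Define the recalibrated prediction Q̃ = P_{Y|Q}. Then I(Y; X | Q̃) = I(Y; X | Q). -/

import Mathlib

open MeasureTheory ProbabilityTheory

noncomputable section

section AuxRecal
open Set

/-- Generalized entropy induced by a scoring rule `S`: `H(q) = ∫ S(q,y) dq(y)`. -/
def gEntropy {𝒴 : Type*} [MeasurableSpace 𝒴] (S : Measure 𝒴 → 𝒴 → ℝ) (q : Measure 𝒴) : ℝ :=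
  ∫ y, S q y ∂q

/-- Generalized conditional mutual information `I(V; W | Z)` induced by the generalized
entropy of `S`: `E[H(P_{V|Z}) − H(P_{V|(W,Z)})]`. -/
def gCondMutualInfo {Ω 𝒴 𝒲 𝒵 : Type*} [MeasurableSpace Ω] [MeasurableSpace 𝒴]
    [StandardBorelSpace 𝒴] [Nonempty 𝒴] [MeasurableSpace 𝒲] [MeasurableSpace 𝒵]
    (S : Measure 𝒴 → 𝒴 → ℝ) (μ : Measure Ω) [IsFiniteMeasure μ]
    (V : Ω → 𝒴) (W : Ω → 𝒲) (Z : Ω → 𝒵) : ℝ :=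
  ∫ ω, (gEntropy S (condDistrib V Z μ (Z ω))
      - gEntropy S (condDistrib V (fun ω' => (W ω', Z ω')) μ (W ω, Z ω))) ∂μ


def probKernelId (𝒴 : Type*) [MeasurableSpace 𝒴] [Nonempty 𝒴] :
    ProbabilityTheory.Kernel (Measure 𝒴) 𝒴 where
  toFun q := if q Set.univ = 1 then q else Measure.dirac (Classical.arbitrary 𝒴)
  measurable' := by
    classical
    refine Measurable.ite ?_ measurable_id measurable_const
    exact (Measure.measurable_coe MeasurableSet.univ) (measurableSet_singleton 1)

lemma probKernelId_apply {𝒴 : Type*} [MeasurableSpace 𝒴] [Nonempty 𝒴] (q : Measure 𝒴) :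
    probKernelId 𝒴 q = if q Set.univ = 1 then q else Measure.dirac (Classical.arbitrary 𝒴) :=
  rfl

instance {𝒴 : Type*} [MeasurableSpace 𝒴] [Nonempty 𝒴] :
    ProbabilityTheory.IsMarkovKernel (probKernelId 𝒴) := by
  refine ⟨fun q => ?_⟩
  rw [probKernelId_apply]
  split_ifs with h
  · exact ⟨h⟩
  · infer_instance

lemma probKernelId_apply_of_prob {𝒴 : Type*} [MeasurableSpace 𝒴] [Nonempty 𝒴]
    (q : Measure 𝒴) [IsProbabilityMeasure q] : probKernelId 𝒴 q = q := by
  rw [probKernelId_apply, if_pos measure_univ]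

/-- The recalibrated prediction is a version of the conditional distribution of `Y` given
itself: `condDistrib Y Q̃ μ (Q̃ ω) = Q̃ ω` almost everywhere. -/
lemma condDistrib_comp_self {Ω 𝒴 : Type*} [MeasurableSpace Ω] [MeasurableSpace 𝒴]
    [StandardBorelSpace 𝒴] [Nonempty 𝒴]
    (μ : Measure Ω) [IsFiniteMeasure μ] {Q : Ω → Measure 𝒴} {Y : Ω → 𝒴}
    (hQ : Measurable Q) (hY : Measurable Y) :
    ∀ᵐ ω ∂μ, condDistrib Y (fun ω' => condDistrib Y Q μ (Q ω')) μ (condDistrib Y Q μ (Q ω))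
      = condDistrib Y Q μ (Q ω) := by
  have hf : Measurable (fun q => condDistrib Y Q μ q) := (condDistrib Y Q μ).measurable
  have hQt : Measurable (fun ω => condDistrib Y Q μ (Q ω)) := hf.comp hQ
  have hcomp : μ.map (fun ω => (condDistrib Y Q μ (Q ω), Y ω))
      = μ.map (fun ω => condDistrib Y Q μ (Q ω)) ⊗ₘ probKernelId 𝒴 := by
    haveI : IsFiniteMeasure (μ.map (fun ω => (condDistrib Y Q μ (Q ω), Y ω))) :=
      Measure.isFiniteMeasure_map μ _
    haveI : IsFiniteMeasure (μ.map (fun ω => condDistrib Y Q μ (Q ω))) :=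
      Measure.isFiniteMeasure_map μ _
    refine ext_of_generate_finite _ generateFrom_prod.symm isPiSystem_prod ?_ ?_
    · rintro _ ⟨s, hs, t, ht, rfl⟩
      replace hs : MeasurableSet s := hs
      replace ht : MeasurableSet t := ht
      rw [Measure.map_apply (hQt.prodMk hY) (hs.prod ht), mk_preimage_prod,
          Measure.compProd_apply_prod hs ht,
          setLIntegral_map hs ((probKernelId 𝒴).measurable_coe ht) hQt]
      have hpt : ∀ ω, probKernelId 𝒴 (condDistrib Y Q μ (Q ω)) t
          = condDistrib Y Q μ (Q ω) t := fun ω => by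
        rw [probKernelId_apply_of_prob]
      rw [setLIntegral_congr_fun (hQt hs) (fun ω _ => hpt ω)]
      have hpre : (fun ω => condDistrib Y Q μ (Q ω)) ⁻¹' s
          = Q ⁻¹' ((fun q => condDistrib Y Q μ q) ⁻¹' s) := rfl
      rw [hpre, setLIntegral_preimage_condDistrib hQ hY.aemeasurable ht (hf hs)]
    · rw [Measure.map_apply (hQt.prodMk hY) MeasurableSet.univ, preimage_univ,
          Measure.compProd_apply_univ, Measure.map_apply hQt MeasurableSet.univ, preimage_univ]
  have h := condDistrib_ae_eq_of_measure_eq_compProd _ hY.aemeasurable (κ := probKernelId 𝒴) hcomp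
  filter_upwards [ae_of_ae_map hQt.aemeasurable h] with ω hω
  rw [hω, probKernelId_apply_of_prob]

/-- If `Y` and `W` are conditionally independent given `X`, then the conditional distribution
of `Y` given `(X, W)` coincides a.e. with the conditional distribution of `Y` given `X`. -/
lemma condDistrib_prod_of_condIndepFun {Ω 𝒳 𝒲 𝒴 : Type*}
    [MeasurableSpace Ω] [StandardBorelSpace Ω] [Nonempty Ω]
    [MeasurableSpace 𝒳] [MeasurableSpace 𝒲]
    [MeasurableSpace 𝒴] [StandardBorelSpace 𝒴] [Nonempty 𝒴]
    (μ : Measure Ω) [IsProbabilityMeasure μ] {X : Ω → 𝒳} {W : Ω → 𝒲} {Y : Ω → 𝒴}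
    (hX : Measurable X) (hW : Measurable W) (hY : Measurable Y)
    (hCI : CondIndepFun (MeasurableSpace.comap X inferInstance) hX.comap_le Y W μ) :
    ∀ᵐ ω ∂μ, condDistrib Y (fun ω' => (X ω', W ω')) μ (X ω, W ω) = condDistrib Y X μ (X ω) := by
  have hZ : Measurable (fun ω => (X ω, W ω)) := hX.prodMk hW
  -- core computation on rectangles, via conditional expectations
  have key : ∀ {A : Set 𝒳} {B : Set 𝒲} {t : Set 𝒴},
      MeasurableSet A → MeasurableSet B → MeasurableSet t →
      μ ((X ⁻¹' A ∩ W ⁻¹' B) ∩ Y ⁻¹' t)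
        = ∫⁻ ω in X ⁻¹' A ∩ W ⁻¹' B, condDistrib Y X μ (X ω) t ∂μ := by
    intro A B t hA hB ht
    have hA_m : MeasurableSet[MeasurableSpace.comap X inferInstance] (X ⁻¹' A) := ⟨A, hA, rfl⟩
    set g : Ω → ℝ := fun ω => (condDistrib Y X μ (X ω) t).toReal with hg_def
    have hg_meas_m : StronglyMeasurable[MeasurableSpace.comap X inferInstance] g :=
      (@Measurable.ennreal_toReal _ (MeasurableSpace.comap X inferInstance) _
        (measurable_condDistrib ht)).stronglyMeasurable
    have hg_int : Integrable g μ := integrable_toReal_condDistrib hX.aemeasurable ht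
    have hgY : g =ᵐ[μ] μ⟦Y ⁻¹' t | MeasurableSpace.comap X inferInstance⟧ := condDistrib_ae_eq_condExp hX hY ht
    have hCImul : μ⟦Y ⁻¹' t ∩ W ⁻¹' B | MeasurableSpace.comap X inferInstance⟧
        =ᵐ[μ] fun ω => (μ⟦Y ⁻¹' t | MeasurableSpace.comap X inferInstance⟧) ω * (μ⟦W ⁻¹' B | MeasurableSpace.comap X inferInstance⟧) ω :=
      (condIndepFun_iff_condExp_inter_preimage_eq_mul hY hW).mp hCI t B ht hB
    have hind_int : Integrable ((W ⁻¹' B).indicator (fun _ => (1:ℝ))) μ :=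
      (integrable_const 1).indicator (hW hB)
    have hprod : (fun ω => g ω * (W ⁻¹' B).indicator (fun _ => (1:ℝ)) ω)
        = (W ⁻¹' B).indicator g := by
      funext ω
      by_cases h : ω ∈ W ⁻¹' B <;> simp [Set.indicator_apply, h]
    have hprod' : g * (W ⁻¹' B).indicator (fun _ => (1:ℝ)) = (W ⁻¹' B).indicator g := hprod
    have hfg_int : Integrable (g * (W ⁻¹' B).indicator (fun _ => (1:ℝ))) μ := by
      rw [hprod']; exact hg_int.indicator (hW hB)
    have hmul : μ[(W ⁻¹' B).indicator g | MeasurableSpace.comap X inferInstance]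
        =ᵐ[μ] fun ω => g ω * (μ⟦W ⁻¹' B | MeasurableSpace.comap X inferInstance⟧) ω := by
      have := condExp_mul_of_stronglyMeasurable_left hg_meas_m hfg_int hind_int
      rw [hprod'] at this
      exact this
    -- finiteness of the right-hand side
    have hfin : ∫⁻ ω in X ⁻¹' A ∩ W ⁻¹' B, condDistrib Y X μ (X ω) t ∂μ ≠ ⊤ := by
      have hle : ∫⁻ ω in X ⁻¹' A ∩ W ⁻¹' B, condDistrib Y X μ (X ω) t ∂μ
          ≤ μ (X ⁻¹' A ∩ W ⁻¹' B) := by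
        rw [← setLIntegral_one]
        exact lintegral_mono fun ω => prob_le_one
      exact (lt_of_le_of_lt hle (measure_lt_top μ _)).ne
    refine (ENNReal.toReal_eq_toReal_iff' (measure_ne_top μ _) hfin).mp ?_
    have hR : (∫⁻ ω in X ⁻¹' A ∩ W ⁻¹' B, condDistrib Y X μ (X ω) t ∂μ).toReal
        = ∫ ω in X ⁻¹' A ∩ W ⁻¹' B, g ω ∂μ :=
      (integral_toReal (((measurable_condDistrib ht).mono hX.comap_le le_rfl).aemeasurable.restrict)
        (ae_of_all _ fun ω => measure_lt_top _ _)).symm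
    have hL : (μ ((X ⁻¹' A ∩ W ⁻¹' B) ∩ Y ⁻¹' t)).toReal
        = ∫ ω in X ⁻¹' A, (Y ⁻¹' t ∩ W ⁻¹' B).indicator (fun _ => (1:ℝ)) ω ∂μ := by
      rw [integral_indicator_const (1:ℝ) ((hY ht).inter (hW hB)),
        Measure.real, Measure.restrict_apply ((hY ht).inter (hW hB)), smul_eq_mul, mul_one]
      congr 2
      ext ω
      simp only [Set.mem_inter_iff]
      tauto
    rw [hR, hL, ← setIntegral_indicator (hW hB)]
    have h1 : ∫ ω in X ⁻¹' A, (Y ⁻¹' t ∩ W ⁻¹' B).indicator (fun _ => (1:ℝ)) ω ∂μ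
        = ∫ ω in X ⁻¹' A, (μ⟦Y ⁻¹' t ∩ W ⁻¹' B | MeasurableSpace.comap X inferInstance⟧) ω ∂μ :=
      (setIntegral_condExp hX.comap_le ((integrable_const (1:ℝ)).indicator ((hY ht).inter (hW hB)))
        hA_m).symm
    have h2 : ∫ ω in X ⁻¹' A, (W ⁻¹' B).indicator g ω ∂μ
        = ∫ ω in X ⁻¹' A, (μ[(W ⁻¹' B).indicator g | MeasurableSpace.comap X inferInstance]) ω ∂μ :=
      (setIntegral_condExp hX.comap_le (hg_int.indicator (hW hB)) hA_m).symm
    rw [h1, h2]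
    refine setIntegral_congr_ae (hX hA) ?_
    filter_upwards [hCImul, hgY, hmul] with ω e1 e2 e3 _
    rw [e1, e3, ← e2]
  -- extend to all measurable sets `u` of the product, for each fixed `t`
  have hgen : ∀ {t : Set 𝒴}, MeasurableSet t → ∀ {u : Set (𝒳 × 𝒲)}, MeasurableSet u →
      μ ((fun ω => (X ω, W ω)) ⁻¹' u ∩ Y ⁻¹' t)
        = ∫⁻ ω in (fun ω => (X ω, W ω)) ⁻¹' u, condDistrib Y X μ (X ω) t ∂μ := by
    intro t ht u hu
    haveI : IsFiniteMeasure (μ.withDensity fun ω => condDistrib Y X μ (X ω) t) := by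
      refine isFiniteMeasure_withDensity ?_
      have hle : ∫⁻ ω, condDistrib Y X μ (X ω) t ∂μ ≤ μ Set.univ := by
        rw [← lintegral_one]
        exact lintegral_mono fun ω => prob_le_one
      exact (lt_of_le_of_lt hle (measure_lt_top _ _)).ne
    have hmeq : (μ.restrict (Y ⁻¹' t)).map (fun ω => (X ω, W ω))
        = (μ.withDensity fun ω => condDistrib Y X μ (X ω) t).map (fun ω => (X ω, W ω)) := by
      haveI : IsFiniteMeasure ((μ.restrict (Y ⁻¹' t)).map (fun ω => (X ω, W ω))) :=
        Measure.isFiniteMeasure_map _ _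
      haveI : IsFiniteMeasure
          ((μ.withDensity fun ω => condDistrib Y X μ (X ω) t).map (fun ω => (X ω, W ω))) :=
        Measure.isFiniteMeasure_map _ _
      refine ext_of_generate_finite _ generateFrom_prod.symm isPiSystem_prod ?_ ?_
      · rintro _ ⟨A, hA, B, hB, rfl⟩
        replace hA : MeasurableSet A := hA
        replace hB : MeasurableSet B := hB
        rw [Measure.map_apply hZ (hA.prod hB), Measure.map_apply hZ (hA.prod hB),
          mk_preimage_prod, Measure.restrict_apply ((hX hA).inter (hW hB)),
          withDensity_apply _ ((hX hA).inter (hW hB))]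
        exact key hA hB ht
      · rw [Measure.map_apply hZ MeasurableSet.univ, Measure.map_apply hZ MeasurableSet.univ,
          preimage_univ, Measure.restrict_apply MeasurableSet.univ,
          withDensity_apply _ MeasurableSet.univ]
        have := key (A := Set.univ) (B := Set.univ) MeasurableSet.univ MeasurableSet.univ ht
        simpa [Measure.restrict_univ] using this
    calc μ ((fun ω => (X ω, W ω)) ⁻¹' u ∩ Y ⁻¹' t)
        = (μ.restrict (Y ⁻¹' t)).map (fun ω => (X ω, W ω)) u := by
          rw [Measure.map_apply hZ hu, Measure.restrict_apply (hZ hu)]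
      _ = (μ.withDensity fun ω => condDistrib Y X μ (X ω) t).map (fun ω => (X ω, W ω)) u := by
          rw [hmeq]
      _ = ∫⁻ ω in (fun ω => (X ω, W ω)) ⁻¹' u, condDistrib Y X μ (X ω) t ∂μ := by
          rw [Measure.map_apply hZ hu, withDensity_apply _ (hZ hu)]
  -- the compProd identity
  have hcomp : μ.map (fun ω => ((X ω, W ω), Y ω))
      = μ.map (fun ω => (X ω, W ω)) ⊗ₘ (condDistrib Y X μ).comap Prod.fst measurable_fst := by
    haveI : IsFiniteMeasure (μ.map (fun ω => ((X ω, W ω), Y ω))) :=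
      Measure.isFiniteMeasure_map μ _
    haveI : IsFiniteMeasure (μ.map (fun ω => (X ω, W ω))) := Measure.isFiniteMeasure_map μ _
    refine ext_of_generate_finite _ generateFrom_prod.symm isPiSystem_prod ?_ ?_
    · rintro _ ⟨u, hu, t, ht, rfl⟩
      replace hu : MeasurableSet u := hu
      replace ht : MeasurableSet t := ht
      rw [Measure.map_apply (hZ.prodMk hY) (hu.prod ht), mk_preimage_prod,
        Measure.compProd_apply_prod hu ht,
        setLIntegral_map hu (Kernel.measurable_coe _ ht) hZ]
      simp only [Kernel.comap_apply]
      exact hgen ht hu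
    · rw [Measure.map_apply (hZ.prodMk hY) MeasurableSet.univ, preimage_univ,
        Measure.compProd_apply_univ, Measure.map_apply hZ MeasurableSet.univ, preimage_univ]
  have h := condDistrib_ae_eq_of_measure_eq_compProd _ hY.aemeasurable
    (κ := (condDistrib Y X μ).comap Prod.fst measurable_fst) hcomp
  filter_upwards [ae_of_ae_map hZ.aemeasurable h] with ω hω
  exact hω

end AuxRecal

/-- **Recalibration preserves sharpness.**
Let `X, Y, Q` be jointly distributed, with `Q` a random probability measure on the target
space, such that `Y` and `Q` are conditionally independent given `X`. Let `Q̃ = P_{Y|Q}` be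
the recalibrated prediction. Then `I(Y; X | Q̃) = I(Y; X | Q)`. -/
theorem recalibration_preserves_sharpness
    {Ω 𝒳 𝒴 : Type*} [MeasurableSpace Ω] [StandardBorelSpace Ω] [Nonempty Ω]
    [MeasurableSpace 𝒳] [MeasurableSpace 𝒴] [StandardBorelSpace 𝒴] [Nonempty 𝒴]
    (μ : Measure Ω) [IsProbabilityMeasure μ]
    (S : Measure 𝒴 → 𝒴 → ℝ)
    (X : Ω → 𝒳) (Y : Ω → 𝒴) (Q : Ω → Measure 𝒴)
    (hX : Measurable X) (hY : Measurable Y) (hQ : Measurable Q)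
    (hQprob : ∀ ω, IsProbabilityMeasure (Q ω))
    -- `Y` and `Q` are conditionally independent given `X`
    (hCI : CondIndepFun (MeasurableSpace.comap X inferInstance) hX.comap_le Y Q μ)
    (Qt : Ω → Measure 𝒴)
    (hQt : ∀ ω, Qt ω = condDistrib Y Q μ (Q ω))
    -- all integrals appearing are assumed to be well defined and finite
    (hint_entQ : Integrable (fun ω => gEntropy S (condDistrib Y Q μ (Q ω))) μ)
    (hint_entXQ : Integrable
      (fun ω => gEntropy S (condDistrib Y (fun ω' => (X ω', Q ω')) μ (X ω, Q ω))) μ)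
    (hint_entQt : Integrable (fun ω => gEntropy S (condDistrib Y Qt μ (Qt ω))) μ)
    (hint_entXQt : Integrable
      (fun ω => gEntropy S (condDistrib Y (fun ω' => (X ω', Qt ω')) μ (X ω, Qt ω))) μ) :
    gCondMutualInfo S μ Y X Qt = gCondMutualInfo S μ Y X Q := by
  have hQtm : Measurable Qt := by
    rw [show Qt = fun ω => condDistrib Y Q μ (Q ω) from funext hQt]
    exact (condDistrib Y Q μ).measurable.comp hQ
  have h1 : ∀ᵐ ω ∂μ, condDistrib Y Qt μ (Qt ω) = condDistrib Y Q μ (Q ω) := by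
    rw [show Qt = fun ω => condDistrib Y Q μ (Q ω) from funext hQt]
    exact condDistrib_comp_self μ hQ hY
  have h2 := condDistrib_prod_of_condIndepFun μ hX hQ hY hCI
  have hCI' : CondIndepFun (MeasurableSpace.comap X inferInstance) hX.comap_le Y Qt μ := by
    rw [show Qt = (fun q => condDistrib Y Q μ q) ∘ Q from funext hQt]
    exact hCI.comp measurable_id (condDistrib Y Q μ).measurable
  have h3 := condDistrib_prod_of_condIndepFun μ hX hQtm hY hCI'
  unfold gCondMutualInfo
  refine integral_congr_ae ?_
  filter_upwards [h1, h2, h3] with ω e1 e2 e3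
  rw [e1, e2, e3]
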